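/- In the 2+4 product model on ℝ⁶ with μ = 1, λ = 0 (round S² times flat T⁴), the invariant Q = −(12/25). In particular Q < 0. -/
import Mathlib


open Finset

/-- Kulkarni–Nomizu product of two 2-tensors: (S∧T)_{ijkl}. -/
def KN {n : ℕ} (S T : Fin n → Fin n → ℝ) : Fin n → Fin n → Fin n → Fin n → ℝ :=
  fun i j k l => S i k * T j l + S j l * T i k - S i l * T j k - S j k * T i l

/-- Composition of 2-tensors (as endomorphisms, indices raised by the standard metric). -/
noncomputable def comp2 {n : ℕ} (S T : Fin n → Fin n → ℝ) : Fin n → Fin n → ℝ :=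
  fun i j => ∑ u, S i u * T u j

/-- Composition of curvature-type 4-tensors: (A∘B)_{ijkl} = (1/2) A_{ij}^{uv} B_{uvkl}. -/
noncomputable def comp4 {n : ℕ} (A B : Fin n → Fin n → Fin n → Fin n → ℝ) :
    Fin n → Fin n → Fin n → Fin n → ℝ :=
  fun i j k l => (1 / 2 : ℝ) * ∑ u, ∑ v, A i j u v * B u v k l

/-- Partial (Ricci-type) trace of a 4-tensor: (tr A)_{ij} = A_{iuj}^{u}. -/
noncomputable def ptr {n : ℕ} (A : Fin n → Fin n → Fin n → Fin n → ℝ) :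
    Fin n → Fin n → ℝ :=
  fun i j => ∑ u, A i u j u

/-- Full trace of a 2-tensor. -/
noncomputable def tr2 {n : ℕ} (S : Fin n → Fin n → ℝ) : ℝ := ∑ i, S i i

/-- Inner product of 2-tensors (standard metric). -/
noncomputable def inner2 {n : ℕ} (S T : Fin n → Fin n → ℝ) : ℝ := ∑ i, ∑ j, S i j * T i j

/-- The first-factor metric on ℝ^m ⊕ ℝ^{6-m} ≅ ℝ⁶, extended by zero. -/
def g6 (m : ℕ) : Fin 6 → Fin 6 → ℝ := fun i j => if i = j ∧ (i : ℕ) < m then 1 else 0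

/-- The second-factor metric on ℝ^m ⊕ ℝ^{6-m} ≅ ℝ⁶, extended by zero. -/
def h6 (m : ℕ) : Fin 6 → Fin 6 → ℝ := fun i j => if i = j ∧ m ≤ (i : ℕ) then 1 else 0

/-- The standard inner product ḡ on ℝ⁶. -/
def gb6 : Fin 6 → Fin 6 → ℝ := fun i j => if i = j then 1 else 0

/-- Curvature model of a product of spaceforms of dimensions m and 6−m with
sectional curvatures μ and ν: R = (μ/2) g∧g + (ν/2) h∧h. -/
noncomputable def Rm (m : ℕ) (μ ν : ℝ) : Fin 6 → Fin 6 → Fin 6 → Fin 6 → ℝ :=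
  fun i j k l => (μ / 2) * KN (g6 m) (g6 m) i j k l + (ν / 2) * KN (h6 m) (h6 m) i j k l

/-- J = tr_ḡ(Ric)/10 in dimension six. -/
noncomputable def Jm (m : ℕ) (μ ν : ℝ) : ℝ := tr2 (ptr (Rm m μ ν)) / 10

/-- Schouten tensor P = (Ric − Jḡ)/4 in dimension six. -/
noncomputable def Pm (m : ℕ) (μ ν : ℝ) : Fin 6 → Fin 6 → ℝ :=
  fun i j => (ptr (Rm m μ ν) i j - Jm m μ ν * gb6 i j) / 4

/-- Trace-free Schouten tensor E = P − (J/6)ḡ. -/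
noncomputable def Em (m : ℕ) (μ ν : ℝ) : Fin 6 → Fin 6 → ℝ :=
  fun i j => Pm m μ ν i j - (Jm m μ ν / 6) * gb6 i j

/-- Weyl tensor W = R − P∧ḡ. -/
noncomputable def Wm (m : ℕ) (μ ν : ℝ) : Fin 6 → Fin 6 → Fin 6 → Fin 6 → ℝ :=
  fun i j k l => Rm m μ ν i j k l - KN (Pm m μ ν) gb6 i j k l

/-- W² = W∘W. -/
noncomputable def W2m (m : ℕ) (μ ν : ℝ) := comp4 (Wm m μ ν) (Wm m μ ν)

/-- W³ = W∘W∘W. -/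
noncomputable def W3m (m : ℕ) (μ ν : ℝ) := comp4 (Wm m μ ν) (W2m m μ ν)

/-- Q = −(40/9)J³ + 16J|E|² − 16 tr E³ − 8 W_{ijkl}E^{ik}E^{jl}. -/
noncomputable def Qm (m : ℕ) (μ ν : ℝ) : ℝ :=
  -(40 / 9) * (Jm m μ ν) ^ 3 + 16 * Jm m μ ν * inner2 (Em m μ ν) (Em m μ ν)
    - 16 * tr2 (comp2 (Em m μ ν) (comp2 (Em m μ ν) (Em m μ ν)))
    - 8 * ∑ i, ∑ j, ∑ k, ∑ l, Wm m μ ν i j k l * Em m μ ν i k * Em m μ ν j l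

/-- L₁ = 96⟨E, tr W²⟩. -/
noncomputable def L1m (m : ℕ) (μ ν : ℝ) : ℝ := 96 * inner2 (Em m μ ν) (ptr (W2m m μ ν))

/-- L₂ = 16⟨E, tr W²⟩ − (4/3) J tr² W². -/
noncomputable def L2m (m : ℕ) (μ ν : ℝ) : ℝ :=
  16 * inner2 (Em m μ ν) (ptr (W2m m μ ν)) - (4 / 3) * Jm m μ ν * tr2 (ptr (W2m m μ ν))

/-- L₃ = 4 tr² W³. -/
noncomputable def L3m (m : ℕ) (μ ν : ℝ) : ℝ := 4 * tr2 (ptr (W3m m μ ν))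


namespace Stmt13Aux

noncomputable def diag (a : Fin 6 → ℝ) : Fin 6 → Fin 6 → ℝ :=
  fun i j => if i = j then a i else 0

lemma diag_symm (a : Fin 6 → ℝ) : ∀ i j, diag a i j = diag a j i := by
  intro i j
  by_cases h : i = j
  · subst h; rfl
  · simp [diag, h, Ne.symm h]

lemma comp2_diag (a b : Fin 6 → ℝ) :
    comp2 (diag a) (diag b) = diag (fun i => a i * b i) := by
  funext i j
  by_cases h : i = j
  · subst h; simp [comp2, diag, mul_ite, ite_mul, Finset.sum_ite_eq, eq_comm]
  · simp [comp2, diag, mul_ite, ite_mul, h, Finset.sum_ite_eq, eq_comm]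

lemma inner2_diag (a b : Fin 6 → ℝ) :
    inner2 (diag a) (diag b) = ∑ i, a i * b i := by
  simp only [inner2, diag, ite_mul, zero_mul]
  refine Finset.sum_congr rfl fun i _ => ?_
  simp [Finset.sum_ite_eq, eq_comm]

lemma tr2_diag (a : Fin 6 → ℝ) : tr2 (diag a) = ∑ i, a i := by
  simp [tr2, diag]

noncomputable def gd : Fin 6 → ℝ := fun i => if (i : ℕ) < 2 then 1 else 0
noncomputable def hd : Fin 6 → ℝ := fun i => if 2 ≤ (i : ℕ) then 1 else 0
noncomputable def ed : Fin 6 → ℝ := fun i => if (i : ℕ) < 2 then 1/6 else -(1/12)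

private lemma v0 : ((0:Fin 6):ℕ) = 0 := rfl
private lemma v1 : ((1:Fin 6):ℕ) = 1 := rfl
private lemma v2 : ((2:Fin 6):ℕ) = 2 := rfl
private lemma v3 : ((3:Fin 6):ℕ) = 3 := rfl
private lemma v4 : ((4:Fin 6):ℕ) = 4 := rfl
private lemma v5 : ((5:Fin 6):ℕ) = 5 := rfl

lemma hg : g6 2 = diag gd := by
  funext i j
  by_cases h : i = j <;> by_cases h2 : (i : ℕ) < 2 <;>
    simp [g6, diag, gd, h, h2]

lemma hh : h6 2 = diag hd := by
  funext i j
  by_cases h : i = j <;> by_cases h2 : 2 ≤ (i : ℕ) <;>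
    simp [h6, diag, hd, h, h2]

lemma hgb : gb6 = diag (fun _ => 1) := rfl

lemma sumKN (S T : Fin 6 → Fin 6 → ℝ) (i j : Fin 6) :
    ∑ u, KN S T i u j u
      = S i j * tr2 T + T i j * tr2 S - comp2 S T i j - comp2 T S i j := by
  have e : ∀ u, KN S T i u j u
      = S i j * T u u + T i j * S u u - S i u * T u j - T i u * S u j := by
    intro u; simp only [KN]; ring
  simp only [e, Finset.sum_add_distrib, Finset.sum_sub_distrib, ← Finset.mul_sum]
  simp only [tr2, comp2]

lemma sum_gd : ∑ i, gd i = 2 := by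
  simp only [gd, Fin.sum_univ_six, v0, v1, v2, v3, v4, v5]
  norm_num

lemma gd_sq : (fun i => gd i * gd i) = gd := by
  funext i
  by_cases h : (i : ℕ) < 2 <;> simp [gd, h]

lemma hRic : ptr (Rm 2 1 0) = diag gd := by
  funext i j
  have h1 : ∀ u, Rm 2 1 0 i u j u = (1/2) * KN (g6 2) (g6 2) i u j u := by
    intro u; simp [Rm]
  simp only [ptr, h1, ← Finset.mul_sum, sumKN, hg, tr2_diag, comp2_diag,
    gd_sq, sum_gd]
  ring

lemma hJ : Jm 2 1 0 = 1/5 := by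
  simp only [Jm, hRic, tr2_diag, sum_gd]
  norm_num

lemma hE : Em 2 1 0 = diag ed := by
  funext i j
  simp only [Em, Pm, hRic, hJ, hgb]
  by_cases h : i = j
  · subst h
    by_cases h2 : (i : ℕ) < 2 <;> simp [diag, gd, ed, h2] <;> norm_num
  · simp [diag, h]

lemma hP : ∀ i j, Pm 2 1 0 i j = (1/5) * diag gd i j + (-(1/20)) * diag hd i j := by
  intro i j
  simp only [Pm, hRic, hJ, hgb]
  by_cases h : i = j
  · subst h
    by_cases h2 : (i : ℕ) < 2
    · simp [diag, gd, hd, h2, show ¬ 2 ≤ (i : ℕ) by omega]; norm_num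
    · simp [diag, gd, hd, h2, show 2 ≤ (i : ℕ) by omega]; norm_num
  · simp [diag, h]

lemma hgb_pt : ∀ i j, gb6 i j = diag gd i j + diag hd i j := by
  intro i j
  by_cases h : i = j
  · subst h
    by_cases h2 : (i : ℕ) < 2
    · simp [gb6, diag, gd, hd, h2, show ¬ 2 ≤ (i : ℕ) by omega]
    · simp [gb6, diag, gd, hd, h2, show 2 ≤ (i : ℕ) by omega]
  · simp [gb6, diag, h]

lemma hW : ∀ i j k l, Wm 2 1 0 i j k l
    = (3/10) * KN (diag gd) (diag gd) i j k l
      - (1/5) * KN (diag gd) (diag hd) i j k l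
      + (1/20) * KN (diag hd) (diag gd) i j k l
      + (1/20) * KN (diag hd) (diag hd) i j k l := by
  intro i j k l
  simp only [Wm, Rm, KN, hP, hgb_pt, hg, hh]
  ring

lemma prod_sum (f g : Fin 6 → Fin 6 → ℝ) :
    ∑ i, ∑ j, ∑ k, ∑ l, f i k * g j l = (∑ i, ∑ k, f i k) * (∑ j, ∑ l, g j l) := by
  have h : ∀ i j : Fin 6, ∑ k, ∑ l, f i k * g j l = (∑ k, f i k) * (∑ l, g j l) :=
    fun i j => (Finset.sum_mul_sum _ _ _ _).symm
  simp only [h]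
  rw [Finset.sum_mul_sum]

lemma sum_swap3 (f : Fin 6 → Fin 6 → Fin 6 → ℝ) :
    ∑ a, ∑ b, ∑ c, f a b c = ∑ c, ∑ b, ∑ a, f a b c := by
  calc ∑ a, ∑ b, ∑ c, f a b c
      = ∑ a, ∑ c, ∑ b, f a b c := Finset.sum_congr rfl (fun a _ => Finset.sum_comm)
    _ = ∑ c, ∑ a, ∑ b, f a b c := Finset.sum_comm
    _ = ∑ c, ∑ b, ∑ a, f a b c := Finset.sum_congr rfl (fun c _ => Finset.sum_comm)

lemma cross_sum (S T A B : Fin 6 → Fin 6 → ℝ) (hT : ∀ i j, T i j = T j i) :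
    ∑ i, ∑ j, ∑ k, ∑ l, S i l * T j k * A i k * B j l
      = inner2 S (comp2 A (comp2 T B)) := by
  simp only [inner2, comp2, Finset.mul_sum]
  refine Finset.sum_congr rfl fun i _ => ?_
  rw [sum_swap3 (fun j k l => S i l * T j k * A i k * B j l)]
  refine Finset.sum_congr rfl fun l _ => Finset.sum_congr rfl fun k _ =>
    Finset.sum_congr rfl fun j _ => ?_
  rw [hT j k]; ring

lemma contr (S T A B : Fin 6 → Fin 6 → ℝ)
    (hS : ∀ i j, S i j = S j i) (hT : ∀ i j, T i j = T j i) :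
    ∑ i, ∑ j, ∑ k, ∑ l, KN S T i j k l * A i k * B j l
      = inner2 S A * inner2 T B + inner2 T A * inner2 S B
        - inner2 S (comp2 A (comp2 T B)) - inner2 T (comp2 A (comp2 S B)) := by
  have e1 : ∀ i j k l : Fin 6, KN S T i j k l * A i k * B j l
      = (S i k * A i k) * (T j l * B j l) + (T i k * A i k) * (S j l * B j l)
        - S i l * T j k * A i k * B j l - T i l * S j k * A i k * B j l := by
    intro i j k l; simp only [KN]; ring
  simp only [e1, Finset.sum_add_distrib, Finset.sum_sub_distrib]
  rw [prod_sum, prod_sum, cross_sum S T A B hT, cross_sum T S A B hS]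
  simp only [inner2]

lemma hEE : inner2 (Em 2 1 0) (Em 2 1 0) = 1/12 := by
  rw [hE, inner2_diag]
  norm_num [ed, Fin.sum_univ_six, v0, v1, v2, v3, v4, v5]

lemma hE3 : tr2 (comp2 (Em 2 1 0) (comp2 (Em 2 1 0) (Em 2 1 0))) = 1/144 := by
  rw [hE, comp2_diag, comp2_diag, tr2_diag]
  norm_num [ed, Fin.sum_univ_six, v0, v1, v2, v3, v4, v5]

lemma hWEE :
    ∑ i, ∑ j, ∑ k, ∑ l, Wm 2 1 0 i j k l * Em 2 1 0 i k * Em 2 1 0 j l = 3/40 := by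
  have e : ∀ i j k l, Wm 2 1 0 i j k l * Em 2 1 0 i k * Em 2 1 0 j l
      = (3/10) * (KN (diag gd) (diag gd) i j k l * Em 2 1 0 i k * Em 2 1 0 j l)
        - (1/5) * (KN (diag gd) (diag hd) i j k l * Em 2 1 0 i k * Em 2 1 0 j l)
        + (1/20) * (KN (diag hd) (diag gd) i j k l * Em 2 1 0 i k * Em 2 1 0 j l)
        + (1/20) * (KN (diag hd) (diag hd) i j k l * Em 2 1 0 i k * Em 2 1 0 j l) := by
    intro i j k l; rw [hW]; ring
  simp only [e, Finset.sum_add_distrib, Finset.sum_sub_distrib, ← Finset.mul_sum]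
  rw [contr _ _ _ _ (diag_symm gd) (diag_symm gd),
      contr _ _ _ _ (diag_symm gd) (diag_symm hd),
      contr _ _ _ _ (diag_symm hd) (diag_symm gd),
      contr _ _ _ _ (diag_symm hd) (diag_symm hd), hE]
  simp only [comp2_diag, inner2_diag]
  norm_num [gd, hd, ed, Fin.sum_univ_six, v0, v1, v2, v3, v4, v5]

end Stmt13Aux

open Stmt13Aux in
theorem stmt13 : Qm 2 1 0 = -(12 / 25) ∧ Qm 2 1 0 < 0 := by
  have h : Qm 2 1 0 = -(12/25) := by
    rw [Qm, hJ, hEE, hE3, hWEE]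
    norm_num
  exact ⟨h, by rw [h]; norm_num⟩
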